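/- Fix a continuous map ψ_reg : X^ℕ → X^ℕ. Then the half-time flow maps of the ψ_reg-regularized solutions satisfy the same RG relation as for the cut-off regularization: ψ^(N+1) = R_g[ψ^(N)] for all N ≥ 1, with initial map ψ^(1)(a) = (f(a_1, a_2), 0, 0, …) + σ_−(ψ_reg(σ_+(a))). -/

import Mathlib

open Filter Topology

namespace SSRG

variable {X : Type*}

/-- Upward shift map `σ₊(a) = (a₂, a₃, …)`. -/
def sigPlus (a : ℕ → X) : ℕ → X := fun i => a (i + 1)

/-- Downward shift map `σ₋(a) = (0, a₁, a₂, …)`. -/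
def sigMinus [Zero X] (a : ℕ → X) : ℕ → X := fun i =>
  match i with
  | 0 => 0
  | j + 1 => a j

/-- Coupling map `ξ(a) = (f(a₁,a₂), g(a₁,a₂), 0, 0, …)`. -/
def xiMap [Zero X] (f g : X → X → X) (a : ℕ → X) : ℕ → X := fun i =>
  match i with
  | 0 => f (a 0) (a 1)
  | 1 => g (a 0) (a 1)
  | _ + 2 => 0

/-- Boundary coupling map `β_b(a) = (g(b,a₁), 0, 0, …)`. -/
def betaMap [Zero X] (g : X → X → X) (b : X) (a : ℕ → X) : ℕ → X := fun i =>
  match i with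
  | 0 => g b (a 0)
  | _ + 1 => 0

/-- The renormalization group operator `R_g[ψ] = σ₋ ∘ ψ ∘ ψ ∘ σ₊ + ξ`. -/
def RGop [AddCommMonoid X] (f g : X → X → X) (ψ : (ℕ → X) → (ℕ → X)) :
    (ℕ → X) → (ℕ → X) :=
  fun a => sigMinus (ψ (ψ (sigPlus a))) + xiMap f g a

/-- The ideal equation at scale `n ≥ 1` and time `t = m·2⁻ⁿ`, `m ≥ 1`.
A field `u : ℕ → ℕ → X` records `u n m = uₙ(m·τₙ)`; row `0` is the boundary row,
`u 0 t = b_t` at integer times `t`. -/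
def IdealEq [AddCommMonoid X] (f g : X → X → X) (u : ℕ → ℕ → X) (n m : ℕ) : Prop :=
  if m % 2 = 1 then
    u n m = f (u n (m - 1)) (u (n + 1) (2 * (m - 1)))
  else
    u n m = f (u n (m - 1)) (u (n + 1) (2 * (m - 1))) +
      g (u (n - 1) ((m - 2) / 2)) (u n (m - 2))

/-- The regularized solution at regularization scale number `N`, with initial
conditions `a` (so `uₙ(0) = aₙ = a (n-1)` for `1 ≤ n ≤ N`) and boundary conditions
`b` (`u₀(t) = b t`): all variables at scales `n > N` vanish and the ideal equations
hold for `1 ≤ n ≤ N`. -/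
def IsRegSol [AddCommMonoid X] (f g : X → X → X) (N : ℕ) (a b : ℕ → X)
    (u : ℕ → ℕ → X) : Prop :=
  (∀ m, u 0 m = b m) ∧
  (∀ n, 1 ≤ n → n ≤ N → u n 0 = a (n - 1)) ∧
  (∀ n, N < n → ∀ m, u n m = 0) ∧
  (∀ n m, 1 ≤ n → n ≤ N → 1 ≤ m → IdealEq f g u n m)

/-- The state `u(1/2) = (u₁(1/2), u₂(1/2), …)` of a field. -/
def halfState (u : ℕ → ℕ → X) : ℕ → X := fun i => u (i + 1) (2 ^ i)

/-- The state `u(1) = (u₁(1), u₂(1), …)` of a field. -/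
def unitState (u : ℕ → ℕ → X) : ℕ → X := fun i => u (i + 1) (2 ^ (i + 1))

/-- The state `u(t) = (u₁(t), u₂(t), …)` of a field at an integer time `t`. -/
def intState (u : ℕ → ℕ → X) (t : ℕ) : ℕ → X := fun i => u (i + 1) (t * 2 ^ (i + 1))

/-- A weak solution of the ideal system: initial conditions `a`, boundary
conditions `b`, and the ideal equations at all points of the lattice. -/
def IsWeakSol [AddCommMonoid X] (f g : X → X → X) (a b : ℕ → X) (u : ℕ → ℕ → X) : Prop :=
  (∀ m, u 0 m = b m) ∧
  (∀ n, 1 ≤ n → u n 0 = a (n - 1)) ∧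
  (∀ n m, 1 ≤ n → 1 ≤ m → IdealEq f g u n m)

/-- Convergence of maps: `ψ N (a_N) → ψ∞ a` for every convergent sequence `a_N → a`
in `X^ℕ` with the product topology. -/
def MapConv [TopologicalSpace X] (ψ : ℕ → (ℕ → X) → (ℕ → X))
    (ψinf : (ℕ → X) → (ℕ → X)) : Prop :=
  ∀ (aN : ℕ → ℕ → X) (a : ℕ → X), Tendsto aN atTop (𝓝 a) →
    Tendsto (fun N => ψ N (aN N)) atTop (𝓝 (ψinf a))

/-- The `ψ_reg`-regularized solution at level `N`: the initial conditions hold at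
all scales `n ≥ 1`, the ideal equations hold for `1 ≤ n ≤ N`, and the variables
at the regularized scales `n > N` evolve over each turn-over time step
`t ↦ t + τ_N` (i.e. between consecutive nonnegative integer multiples `j·τ_N`)
by the given map `ψ_reg`:
`(u_{N+1}(t+τ_N), u_{N+2}(t+τ_N), …) = ψ_reg(u_{N+1}(t), u_{N+2}(t), …)`.
At scale `N+1+k` the time `j·τ_N` has index `j·2^{k+1}`. -/
def IsPsiRegSol [AddCommMonoid X] (f g : X → X → X)
    (ψreg : (ℕ → X) → (ℕ → X)) (N : ℕ) (a b : ℕ → X) (u : ℕ → ℕ → X) : Prop :=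
  (∀ m, u 0 m = b m) ∧
  (∀ n, 1 ≤ n → u n 0 = a (n - 1)) ∧
  (∀ j : ℕ, (fun k => u (N + 1 + k) ((j + 1) * 2 ^ (k + 1))) =
      ψreg (fun k => u (N + 1 + k) (j * 2 ^ (k + 1)))) ∧
  (∀ n m, 1 ≤ n → n ≤ N → 1 ≤ m → IdealEq f g u n m)


section AuxStatement19

variable {X : Type*} [AddCommMonoid X] {f g : X → X → X}

lemma idealEq_odd {u : ℕ → ℕ → X} {n m : ℕ} (h : IdealEq f g u n m) (hm : m % 2 = 1) :
    u n m = f (u n (m - 1)) (u (n + 1) (2 * (m - 1))) := by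
  unfold IdealEq at h; rwa [if_pos hm] at h

lemma idealEq_even {u : ℕ → ℕ → X} {n m : ℕ} (h : IdealEq f g u n m) (hm : m % 2 = 0) :
    u n m = f (u n (m - 1)) (u (n + 1) (2 * (m - 1))) +
      g (u (n - 1) ((m - 2) / 2)) (u n (m - 2)) := by
  unfold IdealEq at h; rwa [if_neg (by omega)] at h

lemma tail_agree {ψreg : (ℕ → X) → (ℕ → X)} {N : ℕ} (hN : 1 ≤ N)
    {a b b'' : ℕ → X} {u w : ℕ → ℕ → X}
    (hu : IsPsiRegSol f g ψreg (N+1) a b u)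
    (hw : IsPsiRegSol f g ψreg N (fun i => u (i+2) (2^i)) b'' w) :
    ∀ j k, w (N+1+k) (j * 2^(k+1)) = u (N+2+k) (2^(N+k) + j * 2^(k+1)) := by
  obtain ⟨-, hu0, hur, -⟩ := hu
  obtain ⟨-, hw0, hwr, -⟩ := hw
  intro j
  induction j with
  | zero =>
    intro k
    rw [zero_mul, add_zero, hw0 (N+1+k) (by omega)]
    show u (N+1+k-1+2) (2^(N+1+k-1)) = _
    rw [show N+1+k-1 = N+k from by omega, show N+k+2 = N+2+k from by omega]
  | succ j ih =>
    intro k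
    have hw' := congrFun (hwr j) k
    have hu' := congrFun (hur (2^(N-1) + j)) k
    have epow : ∀ k' : ℕ, 2^(N-1) * 2^(k'+1) = 2^(N+k') := by
      intro k'; rw [← pow_add]; congr 1; omega
    have efun : (fun k' => w (N+1+k') (j*2^(k'+1)))
        = (fun k' => u (N+1+1+k') ((2^(N-1)+j)*2^(k'+1))) := by
      funext k'
      rw [ih k', show N+1+1+k' = N+2+k' from by omega, add_mul, epow k']
    rw [hw', efun, ← hu', show N+1+1+k = N+2+k from by omega,
      show (2^(N-1)+j+1) * 2^(k+1) = 2^(N+k) + (j+1)*2^(k+1) from by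
        rw [show 2^(N-1)+j+1 = 2^(N-1)+(j+1) from by omega, add_mul, epow k]]

lemma core_agree {ψreg : (ℕ → X) → (ℕ → X)} {N : ℕ} (hN : 1 ≤ N)
    {a b b'' : ℕ → X} {u w : ℕ → ℕ → X}
    (hu : IsPsiRegSol f g ψreg (N+1) a b u)
    (hw : IsPsiRegSol f g ψreg N (fun i => u (i+2) (2^i)) b'' w) :
    ∀ n m, 2 ≤ n → n ≤ N → m ≤ 2^(n-1) → w n m = u (n+1) (2^(n-1) + m) := by
  have T := tail_agree hN hu hw
  obtain ⟨-, hu0, -, hue⟩ := hu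
  obtain ⟨-, hw0, -, hwe⟩ := hw
  suffices H : ∀ t n m, 2 ≤ n → n ≤ N → m ≤ 2^(n-1) → m * 2^(N-n) ≤ t →
      w n m = u (n+1) (2^(n-1) + m) by
    intro n m h2 hN' hm
    exact H (m * 2^(N-n)) n m h2 hN' hm le_rfl
  intro t
  induction t with
  | zero =>
    intro n m h2 hN' hm hmt
    have hP : (0:ℕ) < 2^(N-n) := by positivity
    have hm0 : m = 0 := by
      rcases Nat.eq_zero_or_pos m with h | h
      · exact h
      · exfalso; have := Nat.mul_le_mul h (le_refl (2^(N-n))); omega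
    subst hm0
    rw [add_zero, hw0 n (by omega)]
    show u (n-1+2) (2^(n-1)) = _
    rw [show n-1+2 = n+1 from by omega]
  | succ t ih =>
    intro n m h2 hN' hm hmt
    rcases Nat.lt_or_ge (m * 2^(N-n)) (t+1) with hlt | hge
    · exact ih n m h2 hN' hm (by omega)
    have hP : (1:ℕ) ≤ 2^(N-n) := Nat.one_le_two_pow
    have hm1 : 1 ≤ m := by
      rcases Nat.eq_zero_or_pos m with h | h
      · subst h; rw [Nat.zero_mul] at hge; omega
      · exact h
    have e2 : 2^(n-1) = 2^(n-2)*2 := by rw [← pow_succ]; congr 1; omega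
    have e3 : 2^n = 2^(n-1)*2 := by rw [← pow_succ]; congr 1; omega
    have hsub1 : (m-1) * 2^(N-n) ≤ t := by have := Nat.sub_mul m 1 (2^(N-n)); omega
    have hsub2 : (m-2) * 2^(N-n) ≤ t := by have := Nat.sub_mul m 2 (2^(N-n)); omega
    have hA : w n (m-1) = u (n+1) (2^(n-1) + (m-1)) :=
      ih n (m-1) h2 hN' (by omega) hsub1
    have hB : w (n+1) (2*(m-1)) = u (n+2) (2^n + 2*(m-1)) := by
      rcases Nat.lt_or_ge n N with hnN | hnN
      · have hb2 : 2*(m-1) ≤ 2^n := by omega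
        have hmeas : (2*(m-1)) * 2^(N-(n+1)) ≤ t := by
          have heq : (2*(m-1)) * 2^(N-(n+1)) = (m-1) * 2^(N-n) := by
            rw [show N-n = (N-(n+1))+1 from by omega, pow_succ]; ring
          omega
        exact ih (n+1) (2*(m-1)) (by omega) (by omega) hb2 hmeas
      · have hn' : n = N := by omega
        have h5 := T (m-1) 0
        rw [hn', show 2*(m-1) = (m-1)*2^(0+1) from by ring]
        exact h5
    rcases Nat.even_or_odd m with hpar | hpar
    · have hm2 : m % 2 = 0 := Nat.even_iff.mp hpar
      have hmm : 2 ≤ m := by omega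
      have Hw := idealEq_even (hwe n m (by omega) hN' hm1) hm2
      have Hu : u (n+1) (2^(n-1)+m) =
          f (u (n+1) (2^(n-1)+m-1)) (u (n+2) (2*(2^(n-1)+m-1))) +
            g (u n ((2^(n-1)+m-2)/2)) (u (n+1) (2^(n-1)+m-2)) :=
        idealEq_even (hue (n+1) (2^(n-1)+m) (by omega) (by omega) (by omega)) (by omega)
      have hC : w (n-1) ((m-2)/2) = u n ((2^(n-1)+m-2)/2) := by
        rcases Nat.lt_or_ge 2 n with h3 | h3
        · have hb3 : (m-2)/2 ≤ 2^(n-2) := by omega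
          have hmeas : ((m-2)/2) * 2^(N-(n-1)) ≤ t := by
            have heq : ((m-2)/2) * 2^(N-(n-1)) = (m-2) * 2^(N-n) := by
              rw [show N-(n-1) = (N-n)+1 from by omega, pow_succ,
                show (m-2)/2*(2^(N-n)*2) = ((m-2)/2*2)*2^(N-n) from by ring]
              congr 1
              omega
            omega
          have h6 := ih (n-1) ((m-2)/2) (by omega) (by omega)
            (by rw [show n-1-1 = n-2 from by omega]; exact hb3) hmeas
          rw [h6, show n-1+1 = n from by omega, show n-1-1 = n-2 from by omega]
          congr 1
          omega
        · have hn2 : n = 2 := by omega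
          subst hn2
          have hm'' : m = 2 := by
            have h7 : (2:ℕ)^(2-1) = 2 := by norm_num
            omega
          subst hm''
          rw [show ((2:ℕ)-2)/2 = 0 from rfl, show (2:ℕ)-1 = 1 from rfl, hw0 1 le_rfl]
          show u (1-1+2) (2^(1-1)) = u 2 ((2^(2-1)+2-2)/2)
          norm_num
      have hD : w n (m-2) = u (n+1) (2^(n-1)+m-2) := by
        have h8 := ih n (m-2) h2 hN' (by omega) hsub2
        rw [h8]; congr 1; omega
      rw [Hw, hA, hB, hC, hD, Hu,
        show 2^(n-1)+(m-1) = 2^(n-1)+m-1 from by omega,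
        show 2^n+2*(m-1) = 2*(2^(n-1)+m-1) from by omega]
    · have hm2 : m % 2 = 1 := Nat.odd_iff.mp hpar
      have Hw := idealEq_odd (hwe n m (by omega) hN' hm1) hm2
      have Hu : u (n+1) (2^(n-1)+m) =
          f (u (n+1) (2^(n-1)+m-1)) (u (n+2) (2*(2^(n-1)+m-1))) :=
        idealEq_odd (hue (n+1) (2^(n-1)+m) (by omega) (by omega) (by omega)) (by omega)
      rw [Hw, hA, hB, Hu,
        show 2^(n-1)+(m-1) = 2^(n-1)+m-1 from by omega,
        show 2^n+2*(m-1) = 2*(2^(n-1)+m-1) from by omega]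

lemma second_half {ψreg : (ℕ → X) → (ℕ → X)} {N : ℕ} (hN : 1 ≤ N)
    {a b b'' : ℕ → X} {u w : ℕ → ℕ → X}
    (hu : IsPsiRegSol f g ψreg (N+1) a b u)
    (hw : IsPsiRegSol f g ψreg N (fun i => u (i+2) (2^i)) b'' w) :
    ∀ j, 1 ≤ j → w (j+1) (2^j) = u (j+2) (2^(j+1)) := by
  intro j hj
  rcases le_or_gt (j+1) N with hle | hlt
  · have h : w (j+1) (2^j) = u (j+2) (2^j + 2^j) :=
      core_agree hN hu hw (j+1) (2^j) (by omega) hle le_rfl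
    rw [h, pow_succ]
    congr 1
    omega
  · have h := tail_agree hN hu hw (2^(N-1)) (j-N)
    have e1 : N+1+(j-N) = j+1 := by omega
    have e2 : N+2+(j-N) = j+2 := by omega
    have e3 : 2^(N-1) * 2^(j-N+1) = 2^j := by rw [← pow_add]; congr 1; omega
    have e4 : N+(j-N) = j := by omega
    rw [e1, e2, e3, e4] at h
    rw [h, pow_succ]
    congr 1
    omega

end AuxStatement19

/-- Fix a continuous map `ψ_reg : X^ℕ → X^ℕ`.  The half-time
flow maps `ψ N` of the `ψ_reg`-regularized solutions (pinned down via `hψ`,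
`hex`; they do not depend on the boundary conditions) satisfy the same RG
relation as for the cut-off regularization: `ψ^{(N+1)} = R_g[ψ^{(N)}]` for all
`N ≥ 1`, with the initial map
`ψ^{(1)}(a) = (f(a₁,a₂), 0, 0, …) + σ₋(ψ_reg(σ₊(a)))`. -/
theorem statement19 {X : Type*} [MetricSpace X] [CompleteSpace X]
    [TopologicalSpace.SeparableSpace X] [AddCommMonoid X] [ContinuousAdd X]
    (f g : X → X → X) (hf : Continuous fun p : X × X => f p.1 p.2)
    (hg : Continuous fun p : X × X => g p.1 p.2)
    (ψreg : (ℕ → X) → (ℕ → X)) (hψreg : Continuous ψreg)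
    (ψ : ℕ → (ℕ → X) → (ℕ → X))
    (hψ : ∀ N, 1 ≤ N → ∀ (a' b' : ℕ → X) (u : ℕ → ℕ → X),
      IsPsiRegSol f g ψreg N a' b' u → ψ N a' = halfState u)
    (hex : ∀ N, 1 ≤ N → ∀ a' b' : ℕ → X, ∃ u : ℕ → ℕ → X,
      IsPsiRegSol f g ψreg N a' b' u) :
    (∀ N, 1 ≤ N → ψ (N + 1) = RGop f g (ψ N)) ∧
    (∀ a : ℕ → X, ψ 1 a =
      (fun i => Nat.casesOn i (f (a 0) (a 1)) fun _ => 0) + sigMinus (ψreg (sigPlus a))) := by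
  constructor
  · intro N hN
    funext a
    obtain ⟨u, hu⟩ := hex (N+1) (by omega) a (fun _ => 0)
    have hu0 := hu.2.1
    have hur := hu.2.2.1
    have hue := hu.2.2.2
    have hv : IsPsiRegSol f g ψreg N (sigPlus a) (fun m => u 1 m)
        (fun n m => u (n+1) m) := by
      refine ⟨fun m => rfl, ?_, ?_, ?_⟩
      · intro n hn
        show u (n+1) 0 = sigPlus a (n-1)
        rw [hu0 (n+1) (by omega)]
        show a (n+1-1) = a (n-1+1)
        congr 1
        omega
      · intro j
        have e : ∀ j' : ℕ, (fun k => u (N+1+k+1) (j'*2^(k+1)))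
            = (fun k => u (N+1+1+k) (j'*2^(k+1))) := by
          intro j'; funext k; rw [show N+1+k+1 = N+1+1+k from by omega]
        exact (e (j+1)).trans ((hur j).trans (congrArg ψreg (e j).symm))
      · intro n m hn hnN hm
        have h := hue (n+1) m (by omega) (by omega) hm
        unfold IdealEq at h ⊢
        by_cases hp : m % 2 = 1
        · rw [if_pos hp] at h ⊢
          exact h
        · rw [if_neg hp] at h ⊢
          show u (n+1) m = f (u (n+1) (m-1)) (u (n+1+1) (2*(m-1))) +
            g (u (n-1+1) ((m-2)/2)) (u (n+1) (m-2))
          rw [show n-1+1 = n from by omega]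
          exact h
    have hq1 : ψ N (sigPlus a) = (fun i => u (i+2) (2^i)) := by
      rw [hψ N hN (sigPlus a) (fun m => u 1 m) (fun n m => u (n+1) m) hv]
      rfl
    obtain ⟨w, hw⟩ := hex N hN (fun i => u (i+2) (2^i)) (fun _ => 0)
    have hq2 : ψ N (fun i => u (i+2) (2^i)) = halfState w := hψ N hN _ _ w hw
    have hw0 := hw.2.1
    have hwe := hw.2.2.2
    rw [hψ (N+1) (by omega) a (fun _ => 0) u hu]
    funext i
    show halfState u i = sigMinus (ψ N (ψ N (sigPlus a))) i + xiMap f g a i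
    rw [hq1, hq2]
    obtain _ | i := i
    · show u 1 (2^0) = (0:X) + f (a 0) (a 1)
      rw [zero_add, show (2:ℕ)^0 = 1 from rfl]
      have h' : u 1 1 = f (u 1 0) (u 2 0) :=
        idealEq_odd (hue 1 1 le_rfl (by omega) le_rfl) rfl
      rw [h', hu0 1 le_rfl, hu0 2 (by omega)]
    · obtain _ | j := i
      · show u 2 (2^1) = halfState w 0 + g (a 0) (a 1)
        rw [show (2:ℕ)^1 = 2 from rfl]
        have h1 : u 2 2 = f (u 2 1) (u 3 2) + g (u 1 0) (u 2 0) :=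
          idealEq_even (hue 2 2 (by omega) (by omega) (by omega)) rfl
        have h2 : halfState w 0 = f (u 2 1) (u 3 2) := by
          show w 1 (2^0) = _
          rw [show (2:ℕ)^0 = 1 from rfl]
          have h3 : w 1 1 = f (w 1 0) (w 2 0) :=
            idealEq_odd (hwe 1 1 le_rfl hN le_rfl) rfl
          rw [h3, hw0 1 le_rfl, hw0 2 (by omega)]
          rfl
        rw [h1, h2, hu0 1 le_rfl, hu0 2 (by omega)]
      · show u (j+3) (2^(j+2)) = halfState w (j+1) + (0:X)
        rw [add_zero]
        exact (second_half hN hu hw (j+1) (by omega)).symm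
  · intro a
    obtain ⟨u, hu⟩ := hex 1 le_rfl a (fun _ => 0)
    have hu0 := hu.2.1
    have hur := hu.2.2.1
    have hue := hu.2.2.2
    rw [hψ 1 le_rfl a (fun _ => 0) u hu]
    funext i
    obtain _ | i := i
    · show u 1 (2^0) = f (a 0) (a 1) + (0:X)
      rw [add_zero, show (2:ℕ)^0 = 1 from rfl]
      have h' : u 1 1 = f (u 1 0) (u 2 0) :=
        idealEq_odd (hue 1 1 le_rfl le_rfl le_rfl) rfl
      rw [h', hu0 1 le_rfl, hu0 2 (by omega)]
    · show u (i+2) (2^(i+1)) = (0:X) + ψreg (sigPlus a) i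
      rw [zero_add]
      have h := congrFun (hur 0) i
      have e : (fun k => u (1+1+k) (0*2^(k+1))) = sigPlus a := by
        funext k
        rw [Nat.zero_mul, hu0 (1+1+k) (by omega)]
        show a (1+1+k-1) = a (k+1)
        congr 1
        omega
      rw [e] at h
      rw [show (1:ℕ)+1+i = i+2 from by omega,
        show ((0:ℕ)+1)*2^(i+1) = 2^(i+1) from by omega] at h
      exact h


end SSRG
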